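/- The Motzkin numbers satisfy M_n = ∫_{−1}^3 x^n · (1/(2π))·√((3−x)(1+x)) dx for all n ∈ ℕ; in particular, the Motzkin numbers form a Hausdorff moment sequence on [−1,3]. -/

import Mathlib

open MeasureTheory Real

/-- `y` is a `K`-moment sequence. -/
def IsMomentSeqOn (K : Set ℝ) (y : ℕ → ℝ) : Prop :=
  ∃ μ : Measure ℝ, μ Kᶜ = 0 ∧
    ∀ n : ℕ, Integrable (fun x : ℝ => x ^ n) μ ∧ y n = ∫ x, x ^ n ∂μ

/-- The `n`-th Motzkin number, via the classical formula
`M n = ∑ k, (n choose 2k) · catalan k` (terms with `2k > n` vanish). -/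
def motzkin (n : ℕ) : ℕ := ∑ k ∈ Finset.range (n + 1), n.choose (2 * k) * catalan k

/- Auxiliary lemmas -/

lemma cosJ_even (m : ℕ) :
    ∫ x in (0:ℝ)..π, Real.cos x ^ (2 * m) = π * (Nat.centralBinom m) / 4 ^ m := by
  induction m with
  | zero => simp
  | succ k ih =>
    have h : 2 * (k + 1) = (2 * k) + 2 := by ring
    rw [h, integral_cos_pow, ih]
    have hcb' : ((k:ℝ) + 1) * ((k+1).centralBinom : ℝ) = 2 * (2 * k + 1) * (k.centralBinom : ℝ) := by
      exact_mod_cast Nat.succ_mul_centralBinom_succ k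
    have hk1 : ((k:ℝ) + 1) ≠ 0 := by positivity
    simp only [Real.sin_pi, Real.sin_zero, mul_zero, zero_mul, mul_one]
    push_cast
    field_simp
    linear_combination (-2 * π * (4:ℝ)^k) * hcb'

lemma cosJ_odd (m : ℕ) :
    ∫ x in (0:ℝ)..π, Real.cos x ^ (2 * m + 1) = 0 := by
  induction m with
  | zero => simp
  | succ k ih =>
    have h : 2 * (k + 1) + 1 = (2 * k + 1) + 2 := by ring
    rw [h, integral_cos_pow, ih]
    simp

lemma moment_sub (k : ℕ) :
    ∫ t in (-1:ℝ)..1, t ^ k * Real.sqrt (1 - t ^ 2) =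
      (∫ x in (0:ℝ)..π, Real.cos x ^ k) - ∫ x in (0:ℝ)..π, Real.cos x ^ (k + 2) := by
  have hg : Continuous fun t : ℝ => t ^ k * Real.sqrt (1 - t ^ 2) := by fun_prop
  have hsub := intervalIntegral.integral_comp_smul_deriv (a := π) (b := 0)
    (f := Real.cos) (f' := fun x => -Real.sin x)
    (g := fun t : ℝ => t ^ k * Real.sqrt (1 - t ^ 2))
    (fun x _ => Real.hasDerivAt_cos x) (by fun_prop) hg
  rw [Real.cos_pi, Real.cos_zero] at hsub
  rw [← hsub]
  rw [intervalIntegral.integral_symm 0 π]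
  rw [← intervalIntegral.integral_neg]
  have hcongr : ∫ x in (0:ℝ)..π,
      -((-Real.sin x) • ((fun t : ℝ => t ^ k * Real.sqrt (1 - t ^ 2)) ∘ Real.cos) x)
      = ∫ x in (0:ℝ)..π, (Real.cos x ^ k - Real.cos x ^ (k + 2)) := by
    apply intervalIntegral.integral_congr
    intro x hx
    rw [Set.uIcc_of_le Real.pi_nonneg] at hx
    have hs : Real.sin x ≥ 0 := Real.sin_nonneg_of_mem_Icc hx
    have h1 : Real.sqrt (1 - Real.cos x ^ 2) = Real.sin x := by
      rw [show (1:ℝ) - Real.cos x ^ 2 = Real.sin x ^ 2 by rw [Real.sin_sq]]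
      exact Real.sqrt_sq hs
    simp only [Function.comp, smul_eq_mul, h1]
    linear_combination (Real.cos x ^ k) * Real.sin_sq_add_cos_sq x
  rw [hcongr, intervalIntegral.integral_sub] <;>
    first
    | rfl
    | exact (Continuous.intervalIntegrable (by fun_prop) _ _)

lemma moment_even (m : ℕ) :
    ∫ t in (-1:ℝ)..1, t ^ (2 * m) * Real.sqrt (1 - t ^ 2)
      = π * (catalan m) / (2 * 4 ^ m) := by
  rw [moment_sub, show 2 * m + 2 = 2 * (m + 1) by ring, cosJ_even, cosJ_even]
  have h1 : ((m:ℝ) + 1) * ((m+1).centralBinom : ℝ) = 2 * (2 * m + 1) * (m.centralBinom : ℝ) := by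
    exact_mod_cast Nat.succ_mul_centralBinom_succ m
  have h2 : ((m:ℝ) + 1) * (catalan m : ℝ) = (m.centralBinom : ℝ) := by
    exact_mod_cast succ_mul_catalan_eq_centralBinom m
  have hk1 : ((m:ℝ) + 1) ≠ 0 := by positivity
  have h3 : (((m+1).centralBinom : ℕ) : ℝ) = 2 * (2 * m + 1) * (catalan m : ℝ) := by
    apply mul_left_cancel₀ hk1
    rw [h1, ← h2]; ring
  field_simp
  linear_combination (-8 * (4:ℝ) ^ m) * h2 + (-2 * (4:ℝ) ^ m) * h3

lemma moment_odd (m : ℕ) :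
    ∫ t in (-1:ℝ)..1, t ^ (2 * m + 1) * Real.sqrt (1 - t ^ 2) = 0 := by
  rw [moment_sub, show 2 * m + 1 + 2 = 2 * (m + 1) + 1 by ring, cosJ_odd, cosJ_odd, sub_zero]

lemma sum_even_only {c : ℕ → ℝ} {N : ℕ} (hodd : ∀ m, c (2*m+1) = 0)
    (hbig : ∀ j, N ≤ j → c j = 0) :
    ∑ k ∈ Finset.range N, c k = ∑ m ∈ Finset.range N, c (2*m) := by
  have h2 : ∀ M, ∑ k ∈ Finset.range (2*M), c k = ∑ m ∈ Finset.range M, c (2*m) := by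
    intro M; induction M with
    | zero => simp
    | succ K ih =>
      rw [show 2*(K+1) = (2*K+1)+1 by ring, Finset.sum_range_succ, Finset.sum_range_succ,
        ih, Finset.sum_range_succ, hodd]
      ring
  rw [← h2 N]
  apply Finset.sum_subset
  · intro x hx; simp at hx ⊢; omega
  · intro x _ hx; exact hbig x (by simpa using hx)

lemma motzkin_interval_integral (n : ℕ) :
    (motzkin n : ℝ) =
      ∫ x in (-1:ℝ)..3, x ^ n * (1 / (2 * π) * Real.sqrt ((3 - x) * (1 + x))) := by
  have hg : Continuous fun x : ℝ => x ^ n * (1 / (2 * π) * Real.sqrt ((3 - x) * (1 + x))) := by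
    fun_prop
  have hderiv : ∀ t ∈ Set.uIcc (-1:ℝ) 1,
      HasDerivAt (fun t : ℝ => 1 + 2 * t) ((fun _ : ℝ => (2:ℝ)) t) t := by
    intro t _
    simpa using ((hasDerivAt_id t).const_mul (2:ℝ)).const_add (1:ℝ)
  have hsub := intervalIntegral.integral_comp_smul_deriv (a := (-1:ℝ)) (b := 1)
    (f := fun t : ℝ => 1 + 2 * t) (f' := fun _ : ℝ => (2:ℝ))
    (g := fun x : ℝ => x ^ n * (1 / (2 * π) * Real.sqrt ((3 - x) * (1 + x))))
    hderiv continuousOn_const hg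
  simp only [show (1:ℝ) + 2 * (-1) = -1 from by norm_num,
    show (1:ℝ) + 2 * 1 = 3 from by norm_num] at hsub
  rw [← hsub]
  have hpt : ∀ t : ℝ,
      (2:ℝ) * ((fun x : ℝ => x ^ n * (1 / (2 * π) * Real.sqrt ((3 - x) * (1 + x))))
        (1 + 2 * t))
      = ∑ k ∈ Finset.range (n+1),
          ((n.choose k : ℝ) * 2^k * (2/π)) * (t^k * Real.sqrt (1 - t^2)) := by
    intro t
    simp only
    have harg : (3 - (1 + 2*t)) * (1 + (1 + 2*t)) = 4 * (1 - t^2) := by ring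
    rw [harg, Real.sqrt_mul (by norm_num : (0:ℝ) ≤ 4),
      show Real.sqrt 4 = 2 by
        rw [show (4:ℝ) = 2^2 by norm_num, Real.sqrt_sq (by norm_num : (0:ℝ) ≤ 2)]]
    calc 2 * ((1 + 2*t)^n * (1 / (2*π) * (2 * Real.sqrt (1 - t^2))))
        = ∑ k ∈ Finset.range (n+1),
            ((2*t)^k * 1^(n-k) * (n.choose k : ℝ)) *
              (2 * (1 / (2*π) * (2 * Real.sqrt (1 - t^2)))) := by
          rw [show (1:ℝ) + 2*t = 2*t + 1 by ring, add_pow, Finset.sum_mul, Finset.mul_sum]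
          exact Finset.sum_congr rfl fun k _ => by ring
      _ = _ := by
          apply Finset.sum_congr rfl
          intro k _
          rw [mul_pow, one_pow]
          field_simp
  have hint : (∫ t in (-1:ℝ)..1,
      (2:ℝ) * ((fun x : ℝ => x ^ n * (1 / (2 * π) * Real.sqrt ((3 - x) * (1 + x))))
        (1 + 2 * t)))
      = ∑ k ∈ Finset.range (n+1),
          ((n.choose k : ℝ) * 2^k * (2/π)) * ∫ t in (-1:ℝ)..1, t^k * Real.sqrt (1 - t^2) := by
    rw [intervalIntegral.integral_congr (g := fun t => ∑ k ∈ Finset.range (n+1),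
        ((n.choose k : ℝ) * 2^k * (2/π)) * (t^k * Real.sqrt (1 - t^2)))
        (fun t _ => hpt t)]
    rw [intervalIntegral.integral_finset_sum]
    · exact Finset.sum_congr rfl fun k _ => intervalIntegral.integral_const_mul _ _
    · intro k _
      exact Continuous.intervalIntegrable (by fun_prop) _ _
  have hsmul : (∫ t in (-1:ℝ)..1,
      (2:ℝ) • ((fun x : ℝ => x ^ n * (1 / (2 * π) * Real.sqrt ((3 - x) * (1 + x)))) ∘
        (fun t : ℝ => 1 + 2 * t)) t)
      = ∫ t in (-1:ℝ)..1,
      (2:ℝ) * ((fun x : ℝ => x ^ n * (1 / (2 * π) * Real.sqrt ((3 - x) * (1 + x))))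
        (1 + 2 * t)) := by
    simp [Function.comp]
  rw [hsmul, hint]
  -- now evaluate the sum
  set c : ℕ → ℝ := fun k =>
    ((n.choose k : ℝ) * 2^k * (2/π)) * ∫ t in (-1:ℝ)..1, t^k * Real.sqrt (1 - t^2) with hc
  have hodd : ∀ m, c (2*m+1) = 0 := by
    intro m; simp only [hc, moment_odd, mul_zero]
  have hbig : ∀ j, n + 1 ≤ j → c j = 0 := by
    intro j hj
    simp only [hc, Nat.choose_eq_zero_of_lt (by omega : n < j), Nat.cast_zero, zero_mul, mul_zero]
  rw [sum_even_only hodd hbig]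
  have hterm : ∀ m, c (2*m) = (n.choose (2*m) : ℝ) * (catalan m : ℝ) := by
    intro m
    simp only [hc, moment_even]
    rw [show (2:ℝ)^(2*m) = 4^m by rw [pow_mul]; norm_num]
    have h4 : ((4:ℝ)^m) ≠ 0 := by positivity
    field_simp
  rw [Finset.sum_congr rfl fun m _ => hterm m]
  rw [motzkin]
  push_cast
  ring

theorem motzkin_integral_repr :
    (∀ n : ℕ, (motzkin n : ℝ) =
      ∫ x in (-1:ℝ)..3, x ^ n * (1 / (2 * π) * Real.sqrt ((3 - x) * (1 + x)))) ∧
    IsMomentSeqOn (Set.Icc (-1) 3) (fun n => (motzkin n : ℝ)) := by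
  constructor
  · exact motzkin_interval_integral
  · set w : ℝ → ℝ := fun x => 1 / (2 * π) * Real.sqrt ((3 - x) * (1 + x)) with hw
    have hw_cont : Continuous w := by fun_prop
    have hw_nonneg : ∀ x, 0 ≤ w x := by
      intro x
      apply mul_nonneg
      · positivity
      · exact Real.sqrt_nonneg _
    refine ⟨(volume.restrict (Set.Icc (-1:ℝ) 3)).withDensity
      (fun x => ((w x).toNNReal : ENNReal)), ?_, ?_⟩
    · rw [withDensity_apply _ (measurableSet_Icc.compl)]
      rw [Measure.restrict_restrict (measurableSet_Icc.compl)]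
      rw [Set.compl_inter_self, Measure.restrict_empty]
      simp
    · intro n
      have hmeas : Measurable fun x : ℝ => ((w x).toNNReal : ENNReal) :=
        measurable_coe_nnreal_ennreal.comp hw_cont.measurable.real_toNNReal
      constructor
      · rw [integrable_withDensity_iff hmeas (ae_of_all _ fun x => ENNReal.coe_lt_top)]
        have : Continuous fun x : ℝ => x ^ n * w x := by fun_prop
        have hInt : IntegrableOn (fun x : ℝ => x ^ n * w x) (Set.Icc (-1:ℝ) 3) volume :=
          this.integrableOn_Icc
        apply hInt.congr_fun _ measurableSet_Icc
        · intro x _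
          simp [Real.coe_toNNReal _ (hw_nonneg x)]
      · rw [integral_withDensity_eq_integral_smul hw_cont.measurable.real_toNNReal _]
        have h1 : (∫ x in Set.Icc (-1:ℝ) 3, (w x).toNNReal • x ^ n)
            = ∫ x in Set.Icc (-1:ℝ) 3, x ^ n * w x := by
          apply setIntegral_congr_fun measurableSet_Icc
          intro x _
          simp [NNReal.smul_def, Real.coe_toNNReal _ (hw_nonneg x)]
          ring
        rw [h1]
        rw [MeasureTheory.integral_Icc_eq_integral_Ioc,
          ← intervalIntegral.integral_of_le (by norm_num : (-1:ℝ) ≤ 3)]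
        exact motzkin_interval_integral n
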